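/- On labeled trees, the boolean query π1(a) ∘ π1(b) for distinct edge labels a, b — which is nonempty on a tree exactly when some node has both an outgoing a-edge and an outgoing b-edge — is not boolean-equivalent to any navigational expression built from ∅, id, edge labels, composition, union, and transitive closure. -/

import Mathlib

/-- A labeled tree: label-indexed edge relations whose union is acyclic,
with a unique root without incoming edges and exactly one incoming edge
(a parent together with a label) for every other node. -/
structure LTree (L V : Type) where
  edges : L → V → V → Prop
  acyclic : ∀ v, ¬ Relation.TransGen (fun m n => ∃ ℓ, edges ℓ m n) v v
  root : V
  root_no_in : ∀ m ℓ, ¬ edges ℓ m root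
  in_unique : ∀ n, n ≠ root → ∃! p : V × L, edges p.2 p.1 n

/-- A labeled chain: a labeled tree in which every node has at most one
child. -/
structure LChain (L V : Type) extends LTree L V where
  at_most_one_child :
    ∀ m n n', (∃ ℓ, edges ℓ m n) → (∃ ℓ, edges ℓ m n') → n = n'

/-- Navigational expressions: ∅, id, edge labels, composition, union,
and transitive closure. -/
inductive LExpr (L : Type) : Type
  | empty : LExpr L
  | id : LExpr L
  | label (ℓ : L) : LExpr L
  | comp (e₁ e₂ : LExpr L) : LExpr L
  | union (e₁ e₂ : LExpr L) : LExpr L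
  | tc (e : LExpr L) : LExpr L

/-- Evaluation of an expression on a labeled graph. -/
def LExpr.eval {L V : Type} (edges : L → V → V → Prop) :
    LExpr L → V → V → Prop
  | .empty => fun _ _ => False
  | .id => fun m n => m = n
  | .label ℓ => edges ℓ
  | .comp e₁ e₂ => Relation.Comp (e₁.eval edges) (e₂.eval edges)
  | .union e₁ e₂ => fun m n => e₁.eval edges m n ∨ e₂.eval edges m n
  | .tc e => Relation.TransGen (e.eval edges)

/-- Word language of an expression. -/
inductive LMem {L : Type} : LExpr L → List L → Prop
  | id : LMem .id []
  | label (ℓ : L) : LMem (.label ℓ) [ℓ]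
  | comp {e₁ e₂ w₁ w₂} : LMem e₁ w₁ → LMem e₂ w₂ → LMem (.comp e₁ e₂) (w₁ ++ w₂)
  | unionL {e₁ e₂ w} : LMem e₁ w → LMem (.union e₁ e₂) w
  | unionR {e₁ e₂ w} : LMem e₂ w → LMem (.union e₁ e₂) w
  | tc_single {e w} : LMem e w → LMem (.tc e) w
  | tc_cons {e w₁ w₂} : LMem (.tc e) w₁ → LMem e w₂ → LMem (.tc e) (w₁ ++ w₂)

/-- Satisfiability gives a word in the language. -/
theorem LMem.of_eval {L V : Type} (edges : L → V → V → Prop) :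
    ∀ (e : LExpr L) (m n : V), e.eval edges m n → ∃ w, LMem e w := by
  intro e
  induction e with
  | empty => intro m n h; exact absurd h (by simp [LExpr.eval])
  | id => intro m n _; exact ⟨[], .id⟩
  | label ℓ => intro m n _; exact ⟨[ℓ], .label ℓ⟩
  | comp e₁ e₂ ih₁ ih₂ =>
      rintro m n ⟨c, h₁, h₂⟩
      obtain ⟨w₁, hw₁⟩ := ih₁ m c h₁
      obtain ⟨w₂, hw₂⟩ := ih₂ c n h₂
      exact ⟨w₁ ++ w₂, .comp hw₁ hw₂⟩
  | union e₁ e₂ ih₁ ih₂ =>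
      rintro m n (h | h)
      · obtain ⟨w, hw⟩ := ih₁ m n h; exact ⟨w, .unionL hw⟩
      · obtain ⟨w, hw⟩ := ih₂ m n h; exact ⟨w, .unionR hw⟩
  | tc e ih =>
      intro m n h
      induction h with
      | single h => obtain ⟨w, hw⟩ := ih _ _ h; exact ⟨w, .tc_single hw⟩
      | tail _ h ihh =>
          obtain ⟨w₁, hw₁⟩ := ihh
          obtain ⟨w₂, hw₂⟩ := ih _ _ h
          exact ⟨w₁ ++ w₂, .tc_cons hw₁ hw₂⟩

/-- Edge relation of the chain realizing a word `w`. -/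
def chainE {L : Type} (w : List L) (ℓ : L) (i j : Fin (w.length + 1)) : Prop :=
  w[(i : ℕ)]? = some ℓ ∧ (j : ℕ) = (i : ℕ) + 1

theorem chainE_lt {L : Type} {w : List L} {i j : Fin (w.length + 1)}
    (h : ∃ ℓ, chainE w ℓ i j) : (i : ℕ) < (j : ℕ) := by
  obtain ⟨ℓ, _, hj⟩ := h; omega

/-- A word in the language of `e` is realized on its chain. -/
theorem LMem.eval_chain {L : Type} (w : List L) :
    ∀ {e : LExpr L} {u : List L}, LMem e u → ∀ (i : ℕ)
      (hle : i + u.length ≤ w.length)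
      (hseg : ∀ k, k < u.length → w[(i + k)]? = u[k]?),
      e.eval (chainE w) ⟨i, by omega⟩ ⟨i + u.length, by omega⟩ := by
  intro e u h
  induction h with
  | id => intro i hle hseg; simp [LExpr.eval]
  | label ℓ =>
      intro i hle hseg
      refine ⟨?_, by simp⟩
      have := hseg 0 (by simp)
      simpa using this
  | @comp e₁ e₂ w₁ w₂ h₁ h₂ ih₁ ih₂ =>
      intro i hle hseg
      simp only [List.length_append] at hle ⊢
      refine ⟨⟨i + w₁.length, by omega⟩, ?_, ?_⟩
      · exact ih₁ i (by omega) (fun k hk => by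
          rw [hseg k (by simp; omega)]
          exact List.getElem?_append_left hk)
      · have h2 := ih₂ (i + w₁.length) (by omega) (fun k hk => by
          have := hseg (w₁.length + k) (by simp; omega)
          rw [show i + (w₁.length + k) = i + w₁.length + k by omega] at this
          rw [this, List.getElem?_append_right (by omega)]
          simp)
        convert h2 using 2
        omega
  | unionL h ih => intro i hle hseg; exact Or.inl (ih i hle hseg)
  | unionR h ih => intro i hle hseg; exact Or.inr (ih i hle hseg)
  | tc_single h ih => intro i hle hseg; exact Relation.TransGen.single (ih i hle hseg)
  | @tc_cons e w₁ w₂ h₁ h₂ ih₁ ih₂ =>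
      intro i hle hseg
      simp only [List.length_append] at hle ⊢
      have s₁ := ih₁ i (by omega) (fun k hk => by
        rw [hseg k (by simp; omega)]
        exact List.getElem?_append_left hk)
      have s₂ := ih₂ (i + w₁.length) (by omega) (fun k hk => by
        have := hseg (w₁.length + k) (by simp; omega)
        rw [show i + (w₁.length + k) = i + w₁.length + k by omega] at this
        rw [this, List.getElem?_append_right (by omega)]
        simp)
      have := Relation.TransGen.trans s₁ (Relation.TransGen.single s₂)
      convert this using 2
      exact iff_of_eq (congrArg _ (Fin.ext (Nat.add_assoc _ _ _).symm))

/-- The chain realizing a word `w`. -/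
def chainOf {L : Type} (w : List L) : LChain L (Fin (w.length + 1)) where
  edges := chainE w
  acyclic := by
    intro v hv
    have : ∀ x y : Fin (w.length + 1),
        Relation.TransGen (fun m n => ∃ ℓ, chainE w ℓ m n) x y → (x : ℕ) < y := by
      intro x y h
      induction h with
      | single h => exact chainE_lt h
      | tail _ h ih => exact lt_trans ih (chainE_lt h)
    exact absurd (this v v hv) (lt_irrefl _)
  root := ⟨0, by omega⟩
  root_no_in := by rintro m ℓ ⟨_, h⟩; simp at h
  in_unique := by
    intro n hn
    have hn0 : (n : ℕ) ≠ 0 := by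
      intro h; exact hn (Fin.ext h)
    have hn1 : 1 ≤ (n : ℕ) := by omega
    have hlt : (n : ℕ) - 1 < w.length := by omega
    refine ⟨⟨⟨(n : ℕ) - 1, by omega⟩, w[(n : ℕ) - 1]⟩, ⟨?_, by simp; omega⟩, ?_⟩
    · simp [chainE, List.getElem?_eq_getElem hlt]
    · rintro ⟨p, ℓ⟩ ⟨hp, hpn⟩
      simp only [chainE] at hp hpn ⊢
      have hp' : (p : ℕ) = (n : ℕ) - 1 := by omega
      have heq : w[(p : ℕ)]? = some w[(n : ℕ) - 1] := by
        rw [hp']; simp [List.getElem?_eq_getElem hlt]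
      rw [heq] at hp
      have hℓ : ℓ = w[(n : ℕ) - 1] := by injection hp.symm
      exact Prod.ext (Fin.ext hp') hℓ
  at_most_one_child := by
    rintro m n n' ⟨ℓ, _, h1⟩ ⟨ℓ', _, h2⟩
    exact Fin.ext (by omega)

/-- The tree with a root having an `a`-child and a `b`-child. -/
def forkTree {L : Type} (a b : L) : LTree L (Fin 3) where
  edges ℓ m n := (ℓ = a ∧ m = 0 ∧ n = 1) ∨ (ℓ = b ∧ m = 0 ∧ n = 2)
  acyclic := by
    intro v hv
    have : ∀ x y : Fin 3, Relation.TransGen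
        (fun m n => ∃ ℓ, (ℓ = a ∧ m = 0 ∧ n = 1) ∨ (ℓ = b ∧ m = 0 ∧ n = 2)) x y →
        x = 0 ∧ (y = 1 ∨ y = 2) := by
      intro x y h
      induction h with
      | single h =>
          obtain ⟨ℓ, (⟨_, h1, h2⟩ | ⟨_, h1, h2⟩)⟩ := h
          · exact ⟨h1, Or.inl h2⟩
          · exact ⟨h1, Or.inr h2⟩
      | tail _ h ih =>
          obtain ⟨ℓ, (⟨_, h1, h2⟩ | ⟨_, h1, h2⟩)⟩ := h <;>
            rcases ih.2 with h' | h' <;> simp_all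
    obtain ⟨h1, h2 | h2⟩ := this v v hv <;> simp_all
  root := 0
  root_no_in := by
    rintro m ℓ (⟨_, _, h⟩ | ⟨_, _, h⟩) <;> exact absurd h (by decide)
  in_unique := by
    intro n hn
    fin_cases n
    · exact absurd rfl hn
    · refine ⟨(0, a), Or.inl ⟨rfl, rfl, rfl⟩, ?_⟩
      rintro ⟨p, ℓ⟩ (⟨h1, h2, h3⟩ | ⟨h1, h2, h3⟩)
      · simp_all
      · exact absurd h3 (by decide)
    · refine ⟨(0, b), Or.inr ⟨rfl, rfl, rfl⟩, ?_⟩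
      rintro ⟨p, ℓ⟩ (⟨h1, h2, h3⟩ | ⟨h1, h2, h3⟩)
      · exact absurd h3 (by decide)
      · simp_all

/-- On labeled trees, the boolean query π1(a) ∘ π1(b) for distinct labels
a and b — nonempty exactly when some node has both an outgoing a-edge and
an outgoing b-edge — is not boolean-equivalent to any expression of this
language. -/
theorem stmt10 (L : Type) (a b : L) (hab : a ≠ b) (e : LExpr L) :
    ¬ ∀ (V : Type), Fintype V → ∀ T : LTree L V,
      ((∃ m n : V, e.eval T.edges m n) ↔
        (∃ m : V, (∃ x, T.edges a m x) ∧ (∃ y, T.edges b m y))) := by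
  intro H
  -- the query holds on the fork tree, so e is nonempty there
  have hfork : ∃ m n : Fin 3, e.eval (forkTree a b).edges m n := by
    refine (H (Fin 3) inferInstance (forkTree a b)).2 ?_
    exact ⟨0, ⟨1, Or.inl ⟨rfl, rfl, rfl⟩⟩, ⟨2, Or.inr ⟨rfl, rfl, rfl⟩⟩⟩
  obtain ⟨m, n, hev⟩ := hfork
  obtain ⟨w, hw⟩ := LMem.of_eval _ e m n hev
  -- e is nonempty on the chain realizing w
  have hchain : ∃ m n : Fin (w.length + 1), e.eval (chainOf w).edges m n := by
    refine ⟨⟨0, by omega⟩, ⟨w.length, by omega⟩, ?_⟩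
    have := hw.eval_chain w 0 (by omega) (fun k hk => by simp)
    simp at this; exact this
  -- but then the query holds on the chain, which is impossible
  obtain ⟨m', ⟨x, hxa, _⟩, ⟨y, hyb, _⟩⟩ :=
    (H (Fin (w.length + 1)) inferInstance (chainOf w).toLTree).1 hchain
  have : some a = some b := by
    rw [← hxa, ← hyb]
  exact hab (Option.some.inj this)
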